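/- Let R = ℚ[x_1,...,x_n] and let g_1,...,g_n be a regular sequence of positive-degree homogeneous polynomials. Suppose g_n = g'_n · g''_n where g'_n, g''_n are positive-degree homogeneous. Then there is an exact sequence of R-modules 0 → R/⟨g_1,...,g_{n-1},g'_n⟩ → R/⟨g_1,...,g_{n-1},g_n⟩ → R/⟨g_1,...,g_{n-1},g_n,g''_n⟩ → 0, where the first map is multiplication by g''_n and the second is the natural quotient projection. -/
import Mathlib


open RingTheory.Sequence MvPolynomial

/-- If `g₁,…,gₙ` is a regular sequence of positive-degree homogeneous polynomials in
`R = ℚ[x₁,…,xₙ]` and `gₙ = gₙ' * gₙ''` with both factors positive-degree homogeneous,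
then `0 → R/⟨g₁,…,gₙ₋₁,gₙ'⟩ → R/⟨g₁,…,gₙ₋₁,gₙ⟩ → R/⟨g₁,…,gₙ₋₁,gₙ,gₙ''⟩ → 0` is exact,
with first map multiplication by `gₙ''` and second the quotient projection. -/
theorem exact_sequence_of_factor_regular (n : ℕ)
    (G : Fin (n - 1) → MvPolynomial (Fin n) ℚ) (gn gn' gn'' : MvPolynomial (Fin n) ℚ)
    (dG : Fin (n - 1) → ℕ) (d' d'' : ℕ)
    (hG : ∀ i, (G i).IsHomogeneous (dG i)) (hdG : ∀ i, 0 < dG i)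
    (hgn' : gn'.IsHomogeneous d') (hd' : 0 < d')
    (hgn'' : gn''.IsHomogeneous d'') (hd'' : 0 < d'')
    (hfac : gn = gn' * gn'')
    (hreg : IsRegular (MvPolynomial (Fin n) ℚ) (List.ofFn G ++ [gn])) :
    ∃ (φ : (MvPolynomial (Fin n) ℚ ⧸ Ideal.span (Set.range G ∪ {gn'})) →ₗ[MvPolynomial (Fin n) ℚ]
           (MvPolynomial (Fin n) ℚ ⧸ Ideal.span (Set.range G ∪ {gn})))
      (ψ : (MvPolynomial (Fin n) ℚ ⧸ Ideal.span (Set.range G ∪ {gn})) →ₗ[MvPolynomial (Fin n) ℚ]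
           (MvPolynomial (Fin n) ℚ ⧸ Ideal.span (Set.range G ∪ {gn, gn''}))),
      (∀ p, φ (Ideal.Quotient.mk _ p) = Ideal.Quotient.mk _ (p * gn'')) ∧
      (∀ p, ψ (Ideal.Quotient.mk _ p) = Ideal.Quotient.mk _ p) ∧
      Function.Injective φ ∧ Function.Surjective ψ ∧ Function.Exact φ ψ := by
  classical
  set I0 : Ideal (MvPolynomial (Fin n) ℚ) := Ideal.span (Set.range G) with hI0
  set I' : Ideal (MvPolynomial (Fin n) ℚ) := Ideal.span (Set.range G ∪ {gn'}) with hI'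
  set I : Ideal (MvPolynomial (Fin n) ℚ) := Ideal.span (Set.range G ∪ {gn}) with hI
  set J : Ideal (MvPolynomial (Fin n) ℚ) := Ideal.span (Set.range G ∪ {gn, gn''}) with hJ
  -- `gn` is a nonzerodivisor modulo `I0`.
  have key : ∀ a : MvPolynomial (Fin n) ℚ, gn * a ∈ I0 → a ∈ I0 := by
    have h := ((RingTheory.Sequence.isWeaklyRegular_append_iff _ (List.ofFn G)
      [gn]).mp hreg.toIsWeaklyRegular).2
    rw [RingTheory.Sequence.isWeaklyRegular_singleton_iff] at h
    have hset : { r : MvPolynomial (Fin n) ℚ | r ∈ List.ofFn G } = Set.range G := by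
      ext x; simp [List.mem_ofFn]
    have hof : Ideal.ofList (List.ofFn G) = Ideal.span (Set.range G) :=
      congrArg Ideal.span hset
    have hsm : (Ideal.ofList (List.ofFn G) • ⊤ : Submodule (MvPolynomial (Fin n) ℚ) (MvPolynomial (Fin n) ℚ)) = I0 := by
      rw [hof, smul_eq_mul, Ideal.mul_top, ← hI0]
    intro a ha
    have h0 : gn • (Submodule.Quotient.mk a :
        MvPolynomial (Fin n) ℚ ⧸ (Ideal.ofList (List.ofFn G) • ⊤ : Submodule (MvPolynomial (Fin n) ℚ) (MvPolynomial (Fin n) ℚ))) = gn • 0 := by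
      rw [smul_zero, ← Submodule.Quotient.mk_smul, Submodule.Quotient.mk_eq_zero, hsm]
      simpa [smul_eq_mul] using ha
    have h1 := h h0
    rwa [Submodule.Quotient.mk_eq_zero, hsm] at h1
  -- `gn''` is a nonzerodivisor modulo `I0`.
  have key'' : ∀ a : MvPolynomial (Fin n) ℚ, gn'' * a ∈ I0 → a ∈ I0 := by
    intro a ha
    refine key a ?_
    have : gn * a = gn' * (gn'' * a) := by rw [hfac]; ring
    rw [this]
    exact Ideal.mul_mem_left _ _ ha
  have hI0I' : I0 ≤ I' := Ideal.span_mono Set.subset_union_left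
  have hI0I : I0 ≤ I := Ideal.span_mono Set.subset_union_left
  have hIJ : I ≤ J := Ideal.span_mono (Set.union_subset_union_right _ (by simp))
  have hgn'I' : gn' ∈ I' := Ideal.subset_span (Set.mem_union_right _ rfl)
  have hgnI : gn ∈ I := Ideal.subset_span (Set.mem_union_right _ rfl)
  have hgn''J : gn'' ∈ J := Ideal.subset_span (Set.mem_union_right _ (by simp))
  -- decompositions of the ideals
  have hIdec : ∀ q : MvPolynomial (Fin n) ℚ, q ∈ I → ∃ a ∈ I0, ∃ b : MvPolynomial (Fin n) ℚ, q = a + b * gn := by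
    intro q hq
    rw [hI, Ideal.span_union, Submodule.mem_sup] at hq
    obtain ⟨a, ha, c, hc, rfl⟩ := hq
    rw [Ideal.mem_span_singleton'] at hc
    obtain ⟨b, rfl⟩ := hc
    exact ⟨a, ha, b, rfl⟩
  have hJdec : ∀ q : MvPolynomial (Fin n) ℚ, q ∈ J → ∃ a ∈ I, ∃ b : MvPolynomial (Fin n) ℚ, q = a + b * gn'' := by
    intro q hq
    have : (Set.range G ∪ {gn, gn''} : Set (MvPolynomial (Fin n) ℚ)) = (Set.range G ∪ {gn}) ∪ {gn''} := by
      rw [Set.union_assoc, Set.insert_eq]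
    rw [hJ, this, Ideal.span_union, Submodule.mem_sup] at hq
    obtain ⟨a, ha, c, hc, rfl⟩ := hq
    rw [Ideal.mem_span_singleton'] at hc
    obtain ⟨b, rfl⟩ := hc
    exact ⟨a, ha, b, rfl⟩
  -- define the maps
  let f : MvPolynomial (Fin n) ℚ →ₗ[MvPolynomial (Fin n) ℚ] MvPolynomial (Fin n) ℚ ⧸ I := I.mkQ.comp (LinearMap.mulRight (MvPolynomial (Fin n) ℚ) gn'')
  have hfI' : I' ≤ LinearMap.ker f := by
    rw [hI', Ideal.span_union, sup_le_iff]
    constructor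
    · rw [Ideal.span_le]
      rintro x ⟨i, rfl⟩
      simp only [SetLike.mem_coe, LinearMap.mem_ker, f, LinearMap.comp_apply,
        LinearMap.mulRight_apply, Submodule.mkQ_apply, Submodule.Quotient.mk_eq_zero]
      exact hI0I (Ideal.mul_mem_right _ _ (Ideal.subset_span ⟨i, rfl⟩))
    · rw [Ideal.span_le, Set.singleton_subset_iff]
      simp only [SetLike.mem_coe, LinearMap.mem_ker, f, LinearMap.comp_apply,
        LinearMap.mulRight_apply, Submodule.mkQ_apply, Submodule.Quotient.mk_eq_zero]
      rw [← hfac]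
      exact hgnI
  let φ := Submodule.liftQ I' f hfI'
  have hgJ : I ≤ LinearMap.ker (J.mkQ) := by
    intro x hx
    simp only [LinearMap.mem_ker, Submodule.mkQ_apply, Submodule.Quotient.mk_eq_zero]
    exact hIJ hx
  let ψ := Submodule.liftQ I J.mkQ hgJ
  have hφ : ∀ p : MvPolynomial (Fin n) ℚ, φ (Ideal.Quotient.mk I' p) = Ideal.Quotient.mk I (p * gn'') := by
    intro p; rfl
  have hψ : ∀ p : MvPolynomial (Fin n) ℚ, ψ (Ideal.Quotient.mk I p) = Ideal.Quotient.mk J p := by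
    intro p; rfl
  refine ⟨φ, ψ, hφ, hψ, ?_, ?_, ?_⟩
  · -- injectivity
    rw [← LinearMap.ker_eq_bot, eq_bot_iff]
    intro x hx
    obtain ⟨p, rfl⟩ := Ideal.Quotient.mk_surjective (I := I') x
    rw [LinearMap.mem_ker, hφ] at hx
    rw [Ideal.Quotient.eq_zero_iff_mem] at hx
    obtain ⟨a, ha, b, hab⟩ := hIdec _ hx
    have h2 : gn'' * (p - b * gn') ∈ I0 := by
      have : gn'' * (p - b * gn') = a := by
        rw [hfac] at hab; linear_combination hab
      rw [this]; exact ha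
    have h3 : p - b * gn' ∈ I' := hI0I' (key'' _ h2)
    have h4 : p ∈ I' := by
      have : p = (p - b * gn') + b * gn' := by ring
      rw [this]
      exact Ideal.add_mem _ h3 (Ideal.mul_mem_left _ _ hgn'I')
    show Ideal.Quotient.mk I' p ∈ (⊥ : Submodule (MvPolynomial (Fin n) ℚ) _)
    rw [Submodule.mem_bot, Ideal.Quotient.eq_zero_iff_mem]
    exact h4
  · -- surjectivity
    intro y
    obtain ⟨q, rfl⟩ := Ideal.Quotient.mk_surjective (I := J) y
    exact ⟨Ideal.Quotient.mk I q, hψ q⟩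
  · -- exactness
    intro y
    constructor
    · intro hy
      obtain ⟨q, rfl⟩ := Ideal.Quotient.mk_surjective (I := I) y
      rw [hψ, Ideal.Quotient.eq_zero_iff_mem] at hy
      obtain ⟨a, ha, b, hab⟩ := hJdec _ hy
      refine ⟨Ideal.Quotient.mk I' b, ?_⟩
      rw [hφ]
      rw [Ideal.Quotient.eq]
      have : b * gn'' - q = -a := by linear_combination -hab
      rw [this]
      exact neg_mem ha
    · rintro ⟨x, rfl⟩
      obtain ⟨p, rfl⟩ := Ideal.Quotient.mk_surjective (I := I') x
      rw [hφ, hψ, Ideal.Quotient.eq_zero_iff_mem]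
      exact Ideal.mul_mem_left _ _ hgn''J
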